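/- Let k ∈ {1,2}, let θ ≥ e, and let w be the weight on 𝔻 given by w(z) = (1−|z|^k)·log(θ/(1−|z|^k)). Let μ be a weight on 𝔻 and let φ be a holomorphic self-map of 𝔻. Then the following are equivalent: (i) there exists M ≥ 0 such that every holomorphic function f on 𝔻 with sup_{z∈𝔻} w(z)·|f′(z)| < ∞ satisfies |f(φ(0))| + sup_{z∈𝔻} μ(z)·|(f∘φ)′(z)| ≤ M·(|f(0)| + sup_{z∈𝔻} w(z)·|f′(z)|); (ii) there exists C ≥ 0 such that ‖φ^j‖_μ ≤ C·log(j+1) for every integer j ≥ 1. -/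

import Mathlib

private lemma geom_aux {t : ℝ} (ht0 : 0 ≤ t) (ht1 : t ≤ 1) (j : ℕ) :
    (j : ℝ) * t ^ (j - 1) * (1 - t) ≤ 1 := by
  rcases Nat.eq_zero_or_pos j with h | h
  · simp [h]
  have hsum : (j : ℝ) * t ^ (j - 1) ≤ ∑ i ∈ Finset.range j, t ^ i := by
    have hterm : ∀ i ∈ Finset.range j, t ^ (j - 1) ≤ t ^ i := fun i hi =>
      pow_le_pow_of_le_one ht0 ht1 (by have := Finset.mem_range.mp hi; omega)
    have := Finset.card_nsmul_le_sum (Finset.range j) (fun i => t ^ i) (t ^ (j - 1)) hterm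
    simpa [nsmul_eq_mul] using this
  have hgeo : (∑ i ∈ Finset.range j, t ^ i) * (1 - t) = 1 - t ^ j := by
    have := geom_sum_mul t j
    nlinarith [this]
  have h1t : 0 ≤ 1 - t := by linarith
  have := mul_le_mul_of_nonneg_right hsum h1t
  have htj : 0 ≤ t ^ j := pow_nonneg ht0 j
  nlinarith

private lemma log_frac_aux {s S : ℝ} (hs : 0 < s) (hS : 0 < S) :
    s * Real.log (S / s) ≤ S := by
  have h := Real.log_le_sub_one_of_pos (div_pos hS hs)
  have h2 : s * Real.log (S / s) ≤ s * (S / s - 1) :=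
    mul_le_mul_of_nonneg_left h hs.le
  have heq : s * (S / s - 1) = S - s := by field_simp
  nlinarith

private lemma W_mono {θ s₁ s₂ : ℝ} (hθ0 : 0 < θ) (hθ1 : 1 ≤ Real.log θ)
    (h1 : 0 < s₁) (h12 : s₁ ≤ s₂) (h21 : s₂ ≤ 1) :
    s₁ * Real.log (θ / s₁) ≤ s₂ * Real.log (θ / s₂) := by
  have h2 : 0 < s₂ := lt_of_lt_of_le h1 h12
  have hsplit : Real.log (θ / s₁) = Real.log (θ / s₂) + Real.log (s₂ / s₁) := by
    rw [← Real.log_mul (by positivity) (by positivity)]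
    congr 1; field_simp
  have hlog21 : s₁ * Real.log (s₂ / s₁) ≤ s₂ - s₁ := by
    have h := Real.log_le_sub_one_of_pos (div_pos h2 h1)
    have h3 := mul_le_mul_of_nonneg_left h h1.le
    have heq : s₁ * (s₂ / s₁ - 1) = s₂ - s₁ := by field_simp
    rw [heq] at h3; exact h3
  have hlogθs2 : 1 ≤ Real.log (θ / s₂) := by
    rw [Real.log_div hθ0.ne' h2.ne']
    have := Real.log_nonpos h2.le h21
    linarith
  nlinarith [hsplit]


private lemma testsup {θ : ℝ} (hθ0 : 0 < θ) (hθ1 : 1 ≤ Real.log θ)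
    {t s : ℝ} (ht0 : 0 ≤ t) (ht1 : t < 1) (hs0 : 0 < s) (hs1 : s ≤ 1)
    (hst : s ≤ 2 * (1 - t)) {j : ℕ} (hj : 1 ≤ j) :
    s * Real.log (θ / s) * ((j : ℝ) * t ^ (j - 1)) ≤
      ((2 * Real.log θ + 1) / Real.log 2 + 2) * Real.log ((j : ℝ) + 1) := by
  have hjt0 : 0 ≤ (j : ℝ) * t ^ (j - 1) := by positivity
  have h1 : (j : ℝ) * t ^ (j - 1) * s ≤ 2 := by
    have := geom_aux ht0 ht1.le j
    nlinarith
  have hj1 : (2 : ℝ) ≤ (j : ℝ) + 1 := by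
    have : (1 : ℝ) ≤ (j : ℝ) := by exact_mod_cast hj
    linarith
  have hlogj : Real.log 2 ≤ Real.log ((j : ℝ) + 1) := Real.log_le_log (by norm_num) hj1
  have hlog2 : 0 < Real.log 2 := Real.log_pos (by norm_num)
  have hlogjnn : 0 ≤ Real.log ((j : ℝ) + 1) := le_trans hlog2.le hlogj
  -- split log(θ/s) = log θ - log s
  have hsplit : Real.log (θ / s) = Real.log θ - Real.log s := Real.log_div hθ0.ne' hs0.ne'
  -- s * (-log s) ≤ s * log (j+1) + 1/(j+1)
  have hS0 : (0:ℝ) < 1 / ((j:ℝ) + 1) := by positivity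
  have hlogsS : s * (- Real.log s) ≤ s * Real.log ((j:ℝ)+1) + 1 / ((j:ℝ)+1) := by
    have hfrac := log_frac_aux hs0 hS0
    have hdecomp : - Real.log s = Real.log ((1/((j:ℝ)+1)) / s) + Real.log ((j:ℝ)+1) := by
      rw [Real.log_div (by positivity) hs0.ne', Real.log_div one_ne_zero (by positivity),
        Real.log_one]
      ring
    rw [hdecomp]
    nlinarith
  have htpow1 : t ^ (j - 1) ≤ 1 := pow_le_one₀ ht0 ht1.le
  have hjj1 : (j : ℝ) * t ^ (j-1) * (1 / ((j:ℝ)+1)) ≤ 1 := by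
    rw [div_eq_mul_inv]
    have h1' : (j:ℝ) * t ^ (j-1) ≤ (j:ℝ) := by nlinarith [Nat.cast_nonneg (α := ℝ) j]
    have h2' : (0:ℝ) < (j:ℝ) + 1 := by positivity
    rw [mul_comm ((j:ℝ) * t ^ (j-1))]
    rw [one_mul, ← div_eq_inv_mul, div_le_one h2']
    linarith
  -- main estimate
  have key : s * Real.log (θ / s) * ((j : ℝ) * t ^ (j - 1)) ≤
      2 * Real.log θ + 2 * Real.log ((j:ℝ)+1) + 1 := by
    rw [hsplit]
    have expand : s * (Real.log θ - Real.log s) * ((j : ℝ) * t ^ (j - 1)) =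
        ((j : ℝ) * t ^ (j - 1) * s) * Real.log θ +
        ((j : ℝ) * t ^ (j - 1)) * (s * (- Real.log s)) := by ring
    rw [expand]
    have hlogθ0 : 0 ≤ Real.log θ := by linarith
    have b1 : ((j : ℝ) * t ^ (j - 1) * s) * Real.log θ ≤ 2 * Real.log θ :=
      mul_le_mul_of_nonneg_right h1 hlogθ0
    have b2 : ((j : ℝ) * t ^ (j - 1)) * (s * (- Real.log s)) ≤
        2 * Real.log ((j:ℝ)+1) + 1 := by
      have step : ((j : ℝ) * t ^ (j - 1)) * (s * (- Real.log s)) ≤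
          ((j : ℝ) * t ^ (j - 1)) * (s * Real.log ((j:ℝ)+1) + 1 / ((j:ℝ)+1)) :=
        mul_le_mul_of_nonneg_left hlogsS hjt0
      have expand2 : ((j : ℝ) * t ^ (j - 1)) * (s * Real.log ((j:ℝ)+1) + 1 / ((j:ℝ)+1)) =
          ((j : ℝ) * t ^ (j - 1) * s) * Real.log ((j:ℝ)+1) +
          ((j : ℝ) * t ^ (j-1) * (1 / ((j:ℝ)+1))) := by ring
      rw [expand2] at step
      have b3 : ((j : ℝ) * t ^ (j - 1) * s) * Real.log ((j:ℝ)+1) ≤ 2 * Real.log ((j:ℝ)+1) :=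
        mul_le_mul_of_nonneg_right h1 hlogjnn
      linarith [step, b3, hjj1]
    linarith
  have final : 2 * Real.log θ + 2 * Real.log ((j:ℝ)+1) + 1 ≤
      ((2 * Real.log θ + 1) / Real.log 2 + 2) * Real.log ((j : ℝ) + 1) := by
    have hc0 : 0 < 2 * Real.log θ + 1 := by linarith
    have : 2 * Real.log θ + 1 = ((2 * Real.log θ + 1) / Real.log 2) * Real.log 2 := by
      field_simp
    have hmono : ((2 * Real.log θ + 1) / Real.log 2) * Real.log 2 ≤
        ((2 * Real.log θ + 1) / Real.log 2) * Real.log ((j:ℝ)+1) :=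
      mul_le_mul_of_nonneg_left hlogj (by positivity)
    nlinarith
  linarith


private lemma keybound {θ : ℝ} (hθ0 : 0 < θ) (hθ1 : 1 ≤ Real.log θ)
    {C m p t s : ℝ} (hC : 0 ≤ C) (hm : 0 ≤ m) (hp : 0 ≤ p)
    (ht0 : 0 ≤ t) (ht1 : t < 1) (hs0 : 0 < s) (hs1 : s ≤ 1) (hst : 1 - t ≤ s)
    (H : ∀ j : ℕ, 1 ≤ j → m * (j : ℝ) * t ^ (j - 1) * p ≤ C * Real.log ((j:ℝ) + 1)) :
    m * p ≤ C * Real.exp 2 * Real.log 3 * (s * Real.log (θ / s)) := by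
  have hlogθs : 1 ≤ Real.log (θ / s) := by
    rw [Real.log_div hθ0.ne' hs0.ne']
    have := Real.log_nonpos hs0.le hs1
    linarith
  have hw0 : s ≤ s * Real.log (θ / s) := by nlinarith
  have he2 : (3:ℝ) ≤ Real.exp 2 := by have := Real.add_one_le_exp (2:ℝ); linarith
  have hlog3 : 1 ≤ Real.log 3 := by
    have h1 : Real.exp 1 ≤ 3 := by
      have := Real.exp_one_lt_d9; linarith
    calc (1:ℝ) = Real.log (Real.exp 1) := (Real.log_exp 1).symm
    _ ≤ Real.log 3 := Real.log_le_log (Real.exp_pos 1) h1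
  rcases le_or_gt t (1/2) with hhalf | hhalf
  · -- easy case: use j = 1
    have h1 := H 1 le_rfl
    simp only [Nat.cast_one, pow_zero] at h1
    have hlog2 : Real.log ((1:ℝ) + 1) ≤ 1 := by
      norm_num
      have := Real.log_le_sub_one_of_pos (by norm_num : (0:ℝ) < 2)
      linarith
    have hmp : m * p ≤ C := by
      calc m * p = m * 1 * 1 * p := by ring
      _ ≤ C * Real.log ((1:ℝ)+1) := h1
      _ ≤ C * 1 := mul_le_mul_of_nonneg_left hlog2 hC
      _ = C := mul_one C
    have hs12 : (1:ℝ)/2 ≤ s := by linarith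
    have hw : (1:ℝ)/2 ≤ s * Real.log (θ / s) := by nlinarith
    have ha : (3:ℝ) ≤ Real.exp 2 * Real.log 3 := by nlinarith
    have h33 : (1:ℝ) ≤ Real.exp 2 * Real.log 3 * (s * Real.log (θ / s)) := by nlinarith
    calc m * p ≤ C := hmp
    _ = C * 1 := (mul_one C).symm
    _ ≤ C * (Real.exp 2 * Real.log 3 * (s * Real.log (θ / s))) := by
        apply mul_le_mul_of_nonneg_left _ hC
        linarith
    _ = C * Real.exp 2 * Real.log 3 * (s * Real.log (θ / s)) := by ring
  · -- main case: t > 1/2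
    have hinv1 : (1:ℝ) ≤ 1/s := by rw [le_div_iff₀ hs0]; linarith
    obtain ⟨n, hn1, hns, hn2, hm1⟩ : ∃ n : ℕ, 1 ≤ n ∧ 1/s ≤ (n:ℝ) ∧ (n:ℝ) ≤ 2/s ∧
        ((n - 1 : ℕ) : ℝ) ≤ 1/s := by
      have hceil := Nat.ceil_lt_add_one (R := ℝ) (by positivity : (0:ℝ) ≤ 1/s)
      have hc1 : 1 ≤ ⌈(1:ℝ)/s⌉₊ := by rw [Nat.one_le_ceil_iff]; positivity
      refine ⟨⌈(1:ℝ)/s⌉₊, hc1, Nat.le_ceil _, ?_, ?_⟩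
      · have h2 : (2:ℝ)/s = 1/s + 1/s := by ring
        rw [h2]; linarith
      · rw [Nat.cast_sub hc1]
        push_cast
        linarith
    have ht0' : 0 < t := by linarith
    -- t ^ (n-1) ≥ exp (-2)
    have hlogt : -Real.log t ≤ 2 * (1 - t) := by
      have h := Real.log_le_sub_one_of_pos (by positivity : (0:ℝ) < 1/t)
      rw [Real.log_div one_ne_zero ht0'.ne', Real.log_one] at h
      have : 1/t - 1 = (1-t)/t := by field_simp
      rw [this] at h
      have htt : (1-t)/t ≤ 2*(1-t) := by
        rw [div_le_iff₀ ht0']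
        nlinarith
      linarith
    have hlogtnn : 0 ≤ -Real.log t := by
      have := Real.log_nonpos ht0'.le ht1.le
      linarith
    have hexp : Real.exp (-2) ≤ t ^ (n - 1) := by
      have hts : ((n-1:ℕ):ℝ) * (-Real.log t) ≤ 2 := by
        have step1 : ((n-1:ℕ):ℝ) * (-Real.log t) ≤ (1/s) * (2 * (1-t)) := by
          apply mul_le_mul hm1 hlogt hlogtnn (by positivity)
        have step2 : (1/s) * (2*(1-t)) ≤ 2 := by
          rw [div_mul_eq_mul_div, one_mul, div_le_iff₀ hs0]
          nlinarith
        linarith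
      have : -2 ≤ ((n-1:ℕ):ℝ) * Real.log t := by nlinarith
      calc Real.exp (-2) ≤ Real.exp (((n-1:ℕ):ℝ) * Real.log t) := Real.exp_le_exp.mpr this
      _ = t ^ (n-1) := by
        rw [← Real.log_pow, Real.exp_log (by positivity)]
    have hH := H n hn1
    -- m * p * (1/s) * exp (-2) ≤ C * log (n+1)
    have hkey : m * p * ((1/s) * Real.exp (-2)) ≤ C * Real.log ((n:ℝ)+1) := by
      have hb : (1/s) * Real.exp (-2) ≤ (n:ℝ) * t ^ (n-1) := by
        apply mul_le_mul hns hexp (Real.exp_pos _).le (by positivity)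
      calc m * p * ((1/s) * Real.exp (-2)) ≤ m * p * ((n:ℝ) * t ^ (n-1)) := by
            apply mul_le_mul_of_nonneg_left hb (by positivity)
      _ = m * (n:ℝ) * t ^ (n-1) * p := by ring
      _ ≤ C * Real.log ((n:ℝ)+1) := hH
    have hlogn : Real.log ((n:ℝ)+1) ≤ Real.log 3 * Real.log (θ/s) := by
      have h3s : (n:ℝ) + 1 ≤ 3/s := by
        have : (3:ℝ)/s = 2/s + 1/s := by ring
        rw [this]; linarith
      have hl1 : Real.log ((n:ℝ)+1) ≤ Real.log (3/s) :=
        Real.log_le_log (by positivity) h3s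
      have hl2 : Real.log (3/s) = Real.log 3 - Real.log s := Real.log_div (by norm_num) hs0.ne'
      have hl3 : Real.log (θ/s) = Real.log θ - Real.log s := Real.log_div hθ0.ne' hs0.ne'
      have hlsnn : 0 ≤ -Real.log s := by
        have := Real.log_nonpos hs0.le hs1; linarith
      have p1 : Real.log 3 * 1 ≤ Real.log 3 * Real.log θ :=
        mul_le_mul_of_nonneg_left hθ1 (by linarith)
      have p2 : 1 * (-Real.log s) ≤ Real.log 3 * (-Real.log s) :=
        mul_le_mul_of_nonneg_right hlog3 hlsnn
      rw [hl3]
      rw [hl2] at hl1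
      have hexpand : Real.log 3 * (Real.log θ - Real.log s) =
          Real.log 3 * Real.log θ + Real.log 3 * (-Real.log s) := by ring
      rw [hexpand]
      linarith [p1, p2, hl1]
    -- conclude
    have hfinal : m * p ≤ C * Real.exp 2 * (s * Real.log ((n:ℝ)+1)) := by
      have hepos : (0:ℝ) < Real.exp (-2) := Real.exp_pos _
      have := mul_le_mul_of_nonneg_right hkey (by positivity : (0:ℝ) ≤ s * Real.exp 2)
      have hid : m * p * ((1/s) * Real.exp (-2)) * (s * Real.exp 2) = m * p := by
        have hee : Real.exp (-2) * Real.exp 2 = 1 := by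
          rw [← Real.exp_add]; norm_num
        have hss : s * (1/s) = 1 := by field_simp
        calc m * p * ((1/s) * Real.exp (-2)) * (s * Real.exp 2)
            = m * p * (Real.exp (-2) * Real.exp 2) * (s * (1/s)) := by ring
        _ = m * p := by rw [hee, hss]; ring
      rw [hid] at this
      calc m * p ≤ C * Real.log ((n:ℝ)+1) * (s * Real.exp 2) := this
      _ = C * Real.exp 2 * (s * Real.log ((n:ℝ)+1)) := by ring
    calc m * p ≤ C * Real.exp 2 * (s * Real.log ((n:ℝ)+1)) := hfinal
    _ ≤ C * Real.exp 2 * (s * (Real.log 3 * Real.log (θ/s))) := by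
        apply mul_le_mul_of_nonneg_left _ (by positivity)
        exact mul_le_mul_of_nonneg_left hlogn hs0.le
    _ = C * Real.exp 2 * Real.log 3 * (s * Real.log (θ/s)) := by ring


private lemma growth {θ : ℝ} {k : ℕ} (hθ0 : 0 < θ) (hθ1 : 1 ≤ Real.log θ) (hkpos : 0 < k)
    {f : ℂ → ℂ} (hf : DifferentiableOn ℂ f (Metric.ball 0 1)) {S : ℝ}
    (hS : ∀ x ∈ Metric.ball (0:ℂ) 1,
      (1 - ‖x‖ ^ k) * Real.log (θ / (1 - ‖x‖ ^ k)) *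
        ‖deriv f x‖ ≤ S)
    {u : ℂ} (hu : u ∈ Metric.ball (0:ℂ) 1) :
    ‖f u‖ ≤ ‖f 0‖ +
      S / ((1 - ‖u‖ ^ k) * Real.log (θ / (1 - ‖u‖ ^ k))) := by
  have hu1 : ‖u‖ < 1 := by
    simpa using mem_ball_zero_iff.mp hu
  have hsu0 : 0 < 1 - ‖u‖ ^ k :=
    sub_pos.mpr (pow_lt_one₀ (norm_nonneg u) hu1 hkpos.ne')
  have hsu1 : 1 - ‖u‖ ^ k ≤ 1 := by
    have : 0 ≤ ‖u‖ ^ k := by positivity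
    linarith
  have hlogu : 1 ≤ Real.log (θ / (1 - ‖u‖ ^ k)) := by
    rw [Real.log_div hθ0.ne' hsu0.ne']
    have := Real.log_nonpos hsu0.le hsu1
    linarith
  have hwu0 : 0 < (1 - ‖u‖ ^ k) * Real.log (θ / (1 - ‖u‖ ^ k)) := by
    nlinarith
  have hS0 : 0 ≤ S := by
    have h0 : (0:ℂ) ∈ Metric.ball (0:ℂ) 1 := by simp
    have := hS 0 h0
    have habs0 : ‖(0:ℂ)‖ = 0 := norm_zero
    rw [habs0, zero_pow hkpos.ne', sub_zero, one_mul, div_one] at this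
    nlinarith [norm_nonneg (deriv f 0), hθ1]
  set C0 : ℝ := S / ((1 - ‖u‖ ^ k) * Real.log (θ / (1 - ‖u‖ ^ k))) with hC0
  have hC0nn : 0 ≤ C0 := div_nonneg hS0 hwu0.le
  -- the path
  have hmem : ∀ x : ℝ, x ∈ Set.Icc (0:ℝ) 1 → x • u ∈ Metric.ball (0:ℂ) 1 := by
    intro x hx
    rw [mem_ball_zero_iff]
    rw [norm_smul]
    have : ‖x‖ ≤ 1 := by
      rw [Real.norm_eq_abs, abs_le]; exact ⟨by linarith [hx.1], hx.2⟩
    have hnu : ‖u‖ < 1 := mem_ball_zero_iff.mp hu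
    nlinarith [norm_nonneg u]
  have hderiv : ∀ x ∈ Set.Icc (0:ℝ) 1,
      HasDerivWithinAt (fun y : ℝ => f (y • u)) (u * deriv f (x • u)) (Set.Icc 0 1) x := by
    intro x hx
    have hpath : HasDerivAt (fun y : ℝ => y • u) ((1:ℝ) • u) x :=
      (hasDerivAt_id x).smul_const u
    have hfd : HasDerivAt f (deriv f (x • u)) (x • u) :=
      (hf.differentiableAt ((Metric.isOpen_ball).mem_nhds (hmem x hx))).hasDerivAt
    have hcomp := HasDerivAt.scomp x hfd (by simpa using hpath)
    exact hcomp.hasDerivWithinAt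
  have hbound : ∀ x ∈ Set.Icc (0:ℝ) 1, ‖u * deriv f (x • u)‖ ≤ C0 := by
    intro x hx
    have hmx := hmem x hx
    have hx1 : ‖x • u‖ ≤ ‖u‖ := by
      rw [Complex.real_smul, norm_mul, Complex.norm_real, Real.norm_eq_abs]
      have : |x| ≤ 1 := by rw [abs_le]; exact ⟨by linarith [hx.1], hx.2⟩
      nlinarith [norm_nonneg u]
    have hsx : 1 - ‖u‖ ^ k ≤ 1 - ‖x • u‖ ^ k := by
      have := pow_le_pow_left₀ (norm_nonneg _) hx1 k
      linarith
    have hsx1 : 1 - ‖x • u‖ ^ k ≤ 1 := by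
      have : (0:ℝ) ≤ ‖x • u‖ ^ k := by positivity
      linarith
    have hmono := W_mono hθ0 hθ1 hsu0 hsx hsx1
    have hSx := hS (x • u) hmx
    have hfd' : (1 - ‖u‖ ^ k) * Real.log (θ / (1 - ‖u‖ ^ k)) *
        ‖deriv f (x • u)‖ ≤ S := by
      calc (1 - ‖u‖ ^ k) * Real.log (θ / (1 - ‖u‖ ^ k)) *
          ‖deriv f (x • u)‖ ≤
          (1 - ‖x • u‖ ^ k) * Real.log (θ / (1 - ‖x • u‖ ^ k)) *
          ‖deriv f (x • u)‖ :=
            mul_le_mul_of_nonneg_right hmono (norm_nonneg _)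
      _ ≤ S := hSx
    have hd : ‖deriv f (x • u)‖ ≤ C0 := by
      rw [hC0, le_div_iff₀ hwu0]
      linarith [hfd']
    rw [norm_mul]
    have h1 : ‖u‖ ≤ 1 := (mem_ball_zero_iff.mp hu).le
    have h2 : ‖deriv f (x • u)‖ = ‖deriv f (x • u)‖ := rfl
    nlinarith [norm_nonneg (deriv f (x • u)), norm_nonneg u]
  have hseg := norm_image_sub_le_of_norm_deriv_le_segment' hderiv
    (fun x hx => hbound x (Set.Ico_subset_Icc_self hx)) 1
    (by constructor <;> norm_num)
  have hg1 : (1:ℝ) • u = u := one_smul _ _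
  have hg0 : (0:ℝ) • u = (0:ℂ) := zero_smul _ _
  rw [hg1, hg0] at hseg
  have : ‖f u - f 0‖ ≤ C0 := by simpa using hseg
  have htri : ‖f u‖ ≤ ‖f 0‖ + ‖f u - f 0‖ := by
    have := norm_sub_norm_le (f u) (f 0)
    linarith
  linarith



/-- Let `k ∈ {1,2}`, `θ ≥ e`, and let `w z = (1-|z|^k) * log (θ/(1-|z|^k))` be the
`(k,θ)`-log-Bloch weight on `𝔻`. Let `μ` be a weight on `𝔻` and `φ` a holomorphic
self-map of `𝔻`. Then `C_φ : B^log_(k,θ) → B^μ` is bounded (stated pointwise in `z`,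
which is equivalent to the seminorm inequality) if and only if there is `C ≥ 0` with
`‖φ^j‖_μ ≤ C * log (j+1)` for every `j ≥ 1`. -/
theorem stmt_10
    (k : ℕ) (hk : k = 1 ∨ k = 2) (θ : ℝ) (hθ : Real.exp 1 ≤ θ)
    (w : ℂ → ℝ)
    (hw : ∀ z : ℂ, w z = (1 - ‖z‖ ^ k) * Real.log (θ / (1 - ‖z‖ ^ k)))
    (μ : ℂ → ℝ) (hμc : ContinuousOn μ (Metric.ball (0 : ℂ) 1))
    (hμb : ∃ M : ℝ, ∀ z ∈ Metric.ball (0 : ℂ) 1, μ z ≤ M)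
    (hμp : ∀ z ∈ Metric.ball (0 : ℂ) 1, 0 < μ z)
    (φ : ℂ → ℂ) (hφd : DifferentiableOn ℂ φ (Metric.ball (0 : ℂ) 1))
    (hφm : Set.MapsTo φ (Metric.ball (0 : ℂ) 1) (Metric.ball (0 : ℂ) 1)) :
    (∃ M : ℝ, 0 ≤ M ∧ ∀ f : ℂ → ℂ, DifferentiableOn ℂ f (Metric.ball (0 : ℂ) 1) →
        BddAbove ((fun z : ℂ => w z * ‖deriv f z‖) '' Metric.ball (0 : ℂ) 1) →
        ∀ z ∈ Metric.ball (0 : ℂ) 1,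
          ‖f (φ 0)‖ + μ z * ‖deriv (f ∘ φ) z‖ ≤
          M * (‖f 0‖ +
            sSup ((fun z : ℂ => w z * ‖deriv f z‖) '' Metric.ball (0 : ℂ) 1))) ↔
    (∃ C : ℝ, 0 ≤ C ∧ ∀ j : ℕ, 1 ≤ j → ∀ z ∈ Metric.ball (0 : ℂ) 1,
        μ z * j * ‖φ z‖ ^ (j - 1) * ‖deriv φ z‖ ≤
        C * Real.log ((j : ℝ) + 1)) := by
  have hθ0 : 0 < θ := lt_of_lt_of_le (Real.exp_pos 1) hθ
  have hθ1 : 1 ≤ Real.log θ := by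
    calc (1:ℝ) = Real.log (Real.exp 1) := (Real.log_exp 1).symm
    _ ≤ Real.log θ := Real.log_le_log (Real.exp_pos 1) hθ
  have hkpos : 0 < k := by rcases hk with h | h <;> omega
  have h01 : (0:ℂ) ∈ Metric.ball (0:ℂ) 1 := by simp
  have habs : ∀ z ∈ Metric.ball (0:ℂ) 1, ‖z‖ < 1 := by
    intro z hz
    simpa using mem_ball_zero_iff.mp hz
  have hsball : ∀ z ∈ Metric.ball (0:ℂ) 1, 0 < 1 - ‖z‖ ^ k := by
    intro z hz
    exact sub_pos.mpr (pow_lt_one₀ (norm_nonneg z) (habs z hz) hkpos.ne')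
  have hs1 : ∀ z : ℂ, 1 - ‖z‖ ^ k ≤ 1 := by
    intro z
    have : (0:ℝ) ≤ ‖z‖ ^ k := by positivity
    linarith
  have hlogs : ∀ z ∈ Metric.ball (0:ℂ) 1,
      1 ≤ Real.log (θ / (1 - ‖z‖ ^ k)) := by
    intro z hz
    rw [Real.log_div hθ0.ne' (hsball z hz).ne']
    have := Real.log_nonpos (hsball z hz).le (hs1 z)
    linarith
  have hwpos : ∀ z ∈ Metric.ball (0:ℂ) 1, 0 < w z := by
    intro z hz
    rw [hw z]
    nlinarith [hsball z hz, hlogs z hz]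
  have hst2 : ∀ t : ℝ, 0 ≤ t → t ≤ 1 → 1 - t ^ k ≤ 2 * (1 - t) := by
    intro t ht0 ht1
    rcases hk with h | h <;> subst h <;> nlinarith
  have hst1 : ∀ t : ℝ, 0 ≤ t → t ≤ 1 → 1 - t ≤ 1 - t ^ k := by
    intro t ht0 ht1
    have h := pow_le_pow_of_le_one ht0 ht1 hkpos
    rw [pow_one] at h
    linarith
  constructor
  · -- (i) → (ii)
    rintro ⟨M, hM0, hM⟩
    set c : ℝ := (2 * Real.log θ + 1) / Real.log 2 + 2 with hc
    have hlog2 : 0 < Real.log 2 := Real.log_pos (by norm_num)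
    have hc0 : 0 ≤ c := by
      rw [hc]
      have : 0 ≤ (2 * Real.log θ + 1) / Real.log 2 := by positivity
      linarith
    refine ⟨M * c, mul_nonneg hM0 hc0, ?_⟩
    intro j hj z hz
    have hjne : j ≠ 0 := by omega
    set f : ℂ → ℂ := fun u => u ^ j with hf
    have hfd : DifferentiableOn ℂ f (Metric.ball (0:ℂ) 1) :=
      (differentiable_pow j).differentiableOn
    have hderivf : ∀ x : ℂ, deriv f x = (j : ℂ) * x ^ (j - 1) := by
      intro x; rw [hf]; simp [deriv_pow_field]
    have habsderivf : ∀ x : ℂ, ‖deriv f x‖ =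
        (j : ℝ) * ‖x‖ ^ (j - 1) := by
      intro x
      rw [hderivf x, norm_mul, norm_pow, Complex.norm_natCast]
    have hjlog : 0 ≤ Real.log ((j:ℝ) + 1) := by
      apply Real.log_nonneg
      have : (1:ℝ) ≤ (j:ℝ) := by exact_mod_cast hj
      linarith
    have hub : ∀ y ∈ ((fun z : ℂ => w z * ‖deriv f z‖) ''
        Metric.ball (0:ℂ) 1), y ≤ c * Real.log ((j:ℝ) + 1) := by
      rintro y ⟨x, hx, rfl⟩
      show w x * ‖deriv f x‖ ≤ c * Real.log ((j:ℝ) + 1)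
      rw [hw x, habsderivf x]
      have ht0 : 0 ≤ ‖x‖ := norm_nonneg x
      have ht1 : ‖x‖ < 1 := habs x hx
      have := testsup hθ0 hθ1 ht0 ht1 (hsball x hx) (hs1 x)
        (hst2 _ ht0 ht1.le) hj
      calc (1 - ‖x‖ ^ k) * Real.log (θ / (1 - ‖x‖ ^ k)) *
          ((j:ℝ) * ‖x‖ ^ (j - 1)) ≤
          ((2 * Real.log θ + 1) / Real.log 2 + 2) * Real.log ((j:ℝ) + 1) := this
      _ = c * Real.log ((j:ℝ) + 1) := by rw [hc]
    have hBdd : BddAbove ((fun z : ℂ => w z * ‖deriv f z‖) ''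
        Metric.ball (0:ℂ) 1) := ⟨c * Real.log ((j:ℝ) + 1), hub⟩
    have hsup : sSup ((fun z : ℂ => w z * ‖deriv f z‖) ''
        Metric.ball (0:ℂ) 1) ≤ c * Real.log ((j:ℝ) + 1) :=
      csSup_le (Set.Nonempty.image _ ⟨0, h01⟩) hub
    have hkey := hM f hfd hBdd z hz
    have hf0 : ‖f 0‖ = 0 := by
      rw [hf]; simp [zero_pow hjne]
    have hφz : DifferentiableAt ℂ φ z :=
      hφd.differentiableAt ((Metric.isOpen_ball).mem_nhds hz)
    have hfφz : DifferentiableAt ℂ f (φ z) := (differentiable_pow j).differentiableAt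
    have hcomp : deriv (f ∘ φ) z = deriv f (φ z) * deriv φ z := deriv_comp z hfφz hφz
    have habscomp : ‖deriv (f ∘ φ) z‖ =
        (j : ℝ) * ‖φ z‖ ^ (j - 1) * ‖deriv φ z‖ := by
      rw [hcomp, norm_mul, habsderivf]
    rw [hf0, habscomp] at hkey
    have hμz : 0 ≤ μ z := (hμp z hz).le
    have hfinal : μ z * ((j:ℝ) * ‖φ z‖ ^ (j - 1) * ‖deriv φ z‖) ≤
        M * (c * Real.log ((j:ℝ) + 1)) := by
      have h1 : M * (0 + sSup ((fun z : ℂ => w z * ‖deriv f z‖) ''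
          Metric.ball (0:ℂ) 1)) ≤ M * (c * Real.log ((j:ℝ) + 1)) := by
        apply mul_le_mul_of_nonneg_left _ hM0
        simpa using hsup
      have h2 := hkey
      have h3 : 0 ≤ ‖f (φ 0)‖ := norm_nonneg _
      linarith
    calc μ z * (j:ℝ) * ‖φ z‖ ^ (j - 1) * ‖deriv φ z‖ =
        μ z * ((j:ℝ) * ‖φ z‖ ^ (j - 1) * ‖deriv φ z‖) := by ring
    _ ≤ M * (c * Real.log ((j:ℝ) + 1)) := hfinal
    _ = M * c * Real.log ((j:ℝ) + 1) := by ring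
  · -- (ii) → (i)
    rintro ⟨C, hC0, hC⟩
    set A : ℝ := C * Real.exp 2 * Real.log 3 with hA
    have hlog3 : 0 ≤ Real.log 3 := Real.log_nonneg (by norm_num)
    have hA0 : 0 ≤ A := by rw [hA]; positivity
    have hφ0 : φ 0 ∈ Metric.ball (0:ℂ) 1 := hφm h01
    have hwφ0 : 0 < w (φ 0) := hwpos _ hφ0
    -- key estimate
    have hkeyest : ∀ z ∈ Metric.ball (0:ℂ) 1,
        μ z * ‖deriv φ z‖ ≤ A * w (φ z) := by
      intro z hz
      have hφz := hφm hz
      have ht0 : 0 ≤ ‖φ z‖ := norm_nonneg _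
      have ht1 : ‖φ z‖ < 1 := habs _ hφz
      have hH : ∀ j : ℕ, 1 ≤ j →
          μ z * (j:ℝ) * ‖φ z‖ ^ (j - 1) * ‖deriv φ z‖ ≤
          C * Real.log ((j:ℝ) + 1) := fun j hj => hC j hj z hz
      have := keybound hθ0 hθ1 hC0 (hμp z hz).le (norm_nonneg (deriv φ z))
        ht0 ht1 (hsball _ hφz) (hs1 _) (hst1 _ ht0 ht1.le) hH
      rw [hw (φ z), hA]
      exact this
    set M : ℝ := 1 + (w (φ 0))⁻¹ + A with hM
    have hM0 : 0 ≤ M := by rw [hM]; positivity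
    refine ⟨M, hM0, ?_⟩
    intro f hfd hBdd z hz
    set S : ℝ := sSup ((fun z : ℂ => w z * ‖deriv f z‖) ''
      Metric.ball (0:ℂ) 1) with hS
    have hSmem : ∀ x ∈ Metric.ball (0:ℂ) 1, w x * ‖deriv f x‖ ≤ S :=
      fun x hx => le_csSup hBdd ⟨x, hx, rfl⟩
    have hS0 : 0 ≤ S := by
      have := hSmem 0 h01
      have h0 : 0 ≤ w 0 * ‖deriv f 0‖ :=
        mul_nonneg (hwpos 0 h01).le (norm_nonneg _)
      linarith
    -- growth bound at φ 0
    have hS' : ∀ x ∈ Metric.ball (0:ℂ) 1,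
        (1 - ‖x‖ ^ k) * Real.log (θ / (1 - ‖x‖ ^ k)) *
          ‖deriv f x‖ ≤ S := by
      intro x hx
      have := hSmem x hx
      rw [hw x] at this
      exact this
    have hgrow := growth hθ0 hθ1 hkpos hfd hS' hφ0
    rw [← hw (φ 0)] at hgrow
    -- derivative bound
    have hφz : DifferentiableAt ℂ φ z :=
      hφd.differentiableAt ((Metric.isOpen_ball).mem_nhds hz)
    have hfφz : DifferentiableAt ℂ f (φ z) :=
      hfd.differentiableAt ((Metric.isOpen_ball).mem_nhds (hφm hz))
    have hcomp : deriv (f ∘ φ) z = deriv f (φ z) * deriv φ z := deriv_comp z hfφz hφz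
    have hderivbd : μ z * ‖deriv (f ∘ φ) z‖ ≤ A * S := by
      rw [hcomp, norm_mul]
      have h1 : w (φ z) * ‖deriv f (φ z)‖ ≤ S := hSmem _ (hφm hz)
      have h2 := hkeyest z hz
      have hfa : 0 ≤ ‖deriv f (φ z)‖ := norm_nonneg _
      calc μ z * (‖deriv f (φ z)‖ * ‖deriv φ z‖) =
          ‖deriv f (φ z)‖ * (μ z * ‖deriv φ z‖) := by ring
      _ ≤ ‖deriv f (φ z)‖ * (A * w (φ z)) :=
          mul_le_mul_of_nonneg_left h2 hfa
      _ = A * (w (φ z) * ‖deriv f (φ z)‖) := by ring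
      _ ≤ A * S := mul_le_mul_of_nonneg_left h1 hA0
    -- combine
    have hiw : 0 ≤ (w (φ 0))⁻¹ := by positivity
    have hdiv : S / w (φ 0) = S * (w (φ 0))⁻¹ := div_eq_mul_inv S _
    rw [hdiv] at hgrow
    have hf0nn : 0 ≤ ‖f 0‖ := norm_nonneg _
    rw [hM]
    nlinarith [mul_nonneg hiw hf0nn, mul_nonneg hA0 hf0nn, mul_nonneg hA0 hS0,
      mul_nonneg hiw hS0, hgrow, hderivbd]
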